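/- Let f ∈ F_r with r ≥ 1. Then |♭f| ≥ r + 1, with equality if and only if f is equal up to shift to q = (1, 2, …, r). -/

import Mathlib

open Finset

namespace KacCatalan

/-- A weight `f : ℤ → {×,·}` (with finitely many `×`) is encoded by the finite
set `f⁻¹(×) ⊆ ℤ`; membership `x ∈ f` means `f(x) = ×`. -/
abbrev Weight := Finset ℤ

/-- `f` and `g` are equal up to shift, i.e. the entries of `f` are obtained from
those of `g` by adding a fixed constant. -/
def UpToShift (f g : Weight) : Prop := ∃ k : ℤ, f = g.image (fun x => x + k)

/-- The largest entry `a_r` of `f` (junk value `0` for `f = ∅`). -/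
def maxD (f : Weight) : ℤ := f.max.getD 0

/-- The smallest entry `a₁` of `f` (junk value `0` for `f = ∅`). -/
def minD (f : Weight) : ℤ := f.min.getD 0

/-- The tally function `T_f : ℤ → ℤ`, the unique function with `T_f(a_r) = 1`
and `T_f(b+1) = T_f(b) + 1` if `f(b+1) = ×`, `T_f(b+1) = T_f(b) - 1` otherwise
(given here in closed form). -/
noncomputable def tally (f : Weight) (b : ℤ) : ℤ :=
  1 + 2 * (((f ∩ Finset.Ioc (maxD f) b).card : ℤ) - ((f ∩ Finset.Ioc b (maxD f)).card : ℤ))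
    - (b - maxD f)

/-- Any finite set of integers omits some integer of the form `a + 1 + n`. -/
theorem exists_free (T : Finset ℤ) (a : ℤ) : ∃ n : ℕ, a + 1 + (n : ℤ) ∉ T := by
  by_contra h
  push_neg at h
  have hinj : Function.Injective (fun n : ℕ => a + 1 + (n : ℤ)) := by
    intro m n hmn
    have : ((m : ℤ)) = (n : ℤ) := by simpa using hmn
    exact_mod_cast this
  exact (Set.infinite_of_injective_forall_mem hinj (fun n => h n)) T.finite_toSet

/-- The end of the cap starting at `a`: the smallest integer greater than `a`
avoiding the (finite) forbidden set `T`. -/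
def capEnd (T : Finset ℤ) (a : ℤ) : ℤ := a + 1 + (Nat.find (exists_free T a) : ℤ)

/-- Build the caps starting at the points of the given list (processed in order,
which will be right-to-left on the number line), where `S = f⁻¹(×)` and `used`
records the ends of the already-constructed caps.  A cap is encoded as a pair
`(start, end)` with `start < end`. -/
def buildCaps (S : Finset ℤ) : List ℤ → Finset ℤ → Finset (ℤ × ℤ)
  | [], _ => ∅
  | a :: rest, used =>
      insert (a, capEnd (S ∪ used) a)
        (buildCaps S rest (insert (capEnd (S ∪ used) a) used))

/-- The cap diagram `D_cap(f)`: one cap starting at each entry of `f`,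
constructed from right to left, each cap ending at the smallest integer greater
than its start that is not in `f⁻¹(×)` and not the end of an
already-constructed cap. -/
def Dcap (f : Weight) : Finset (ℤ × ℤ) :=
  buildCaps f ((f.sort (· ≤ ·)).reverse) ∅

/-- A set of caps `D` matches `f` if every cap of `D` joins an integer where
`f` takes the value `·` to an integer where `f` takes the value `×`. -/
def Matches (D : Finset (ℤ × ℤ)) (f : Weight) : Prop :=
  ∀ c ∈ D, (c.1 ∈ f ∧ c.2 ∉ f) ∨ (c.1 ∉ f ∧ c.2 ∈ f)

/-- `♭f`: the set of `g ∈ F_r` (`r = #f`) such that `D_cap(g)` matches `f`. -/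
def flat (f : Weight) : Set Weight :=
  {g | g.card = f.card ∧ Matches (Dcap g) f}

/-- `L^a_b f`: change the value of `f` at `a` from `×` to `·` and at `b`
from `·` to `×`. -/
def Lmove (f : Weight) (b a : ℤ) : Weight := insert b (f.erase a)

/-- The move `L^a_b f` is legal. -/
def IsLegal (f : Weight) (b a : ℤ) : Prop :=
  b < a ∧ b ∉ f ∧ a ∈ f ∧
    (∀ x : ℤ, b ≤ x → x < a → 1 ≤ tally f a - tally f x) ∧
    tally f a - tally f b = 1

/-- `LM f = {i ∈ {1,…,r} : L^a_{a-1-2i} f is a legal move}`, where `a = a_r`. -/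
def LM (f : Weight) : Set ℕ :=
  {i | 1 ≤ i ∧ i ≤ f.card ∧ IsLegal f (maxD f - 1 - 2 * (i : ℤ)) (maxD f)}

/-- `♭_{1/2} f`: those `g ∈ ♭f` whose cap diagram contains the cap joining
`a = a_r` to `a + 1`. -/
def flatHalf (f : Weight) : Set Weight :=
  {g | g ∈ flat f ∧ (maxD f, maxD f + 1) ∈ Dcap g}

/-- `♭_i f = {L^a_{a-1-2i} h : h ∈ ♭_{1/2} f} ∩ ♭f`. -/
def flatI (f : Weight) (i : ℕ) : Set Weight :=
  ((fun h => Lmove h (maxD f - 1 - 2 * (i : ℤ)) (maxD f)) '' flatHalf f) ∩ flat f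

/-- `max f`: integer points where `T_f` has a (strict) local maximum. -/
def maxSet (f : Weight) : Set ℤ :=
  {c | tally f (c - 1) < tally f c ∧ tally f (c + 1) < tally f c}

/-- `min f`: integer points where `T_f` has a (strict) local minimum. -/
def minSet (f : Weight) : Set ℤ :=
  {c | tally f c < tally f (c - 1) ∧ tally f c < tally f (c + 1)}

/-- `f₊`: points where `T_f` increases on both sides. -/
def fplus (f : Weight) : Set ℤ :=
  {c | tally f c - tally f (c - 1) = 1 ∧ tally f (c + 1) - tally f c = 1}

/-- `f₋`: points where `T_f` decreases on both sides. -/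
def fminus (f : Weight) : Set ℤ :=
  {c | tally f c - tally f (c - 1) = -1 ∧ tally f (c + 1) - tally f c = -1}

/-- `p = (2, 4, …, 2r)`. -/
noncomputable def pSet (r : ℕ) : Weight := (Finset.Icc (1 : ℤ) (r : ℤ)).image (fun x => 2 * x)

/-- `q = (1, 2, …, r)`. -/
noncomputable def qSet (r : ℕ) : Weight := Finset.Icc (1 : ℤ) (r : ℤ)


/-- balance of `g` on the interval `(s, c]` -/
noncomputable def bal (g : Finset ℤ) (s c : ℤ) : ℤ := 2 * ((g ∩ Finset.Ioc s c).card : ℤ) - (c - s)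

lemma bal_self (g : Finset ℤ) (s : ℤ) : bal g s s = 0 := by
  simp [bal]

lemma bal_exists (g : Finset ℤ) (s : ℤ) : ∃ n : ℕ, bal g s (s + 1 + (n : ℤ)) < 0 := by
  refine ⟨2 * g.card, ?_⟩
  have h1 : (g ∩ Finset.Ioc s (s + 1 + (2 * g.card : ℕ))).card ≤ g.card :=
    Finset.card_le_card (Finset.inter_subset_left)
  have h2 : ((g ∩ Finset.Ioc s (s + 1 + ((2 * g.card : ℕ) : ℤ))).card : ℤ) ≤ (g.card : ℤ) := by
    exact_mod_cast h1
  simp only [bal]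
  have h3 : ((2 * g.card : ℕ) : ℤ) = 2 * (g.card : ℤ) := by push_cast; ring
  rw [h3] at h2 ⊢
  omega

/-- the end of the cap starting at `s` in `g`: least `c > s` with negative balance. -/
noncomputable def mEnd (g : Finset ℤ) (s : ℤ) : ℤ := s + 1 + (Nat.find (bal_exists g s) : ℤ)

lemma lt_mEnd (g : Finset ℤ) (s : ℤ) : s < mEnd g s := by
  have : (0 : ℤ) ≤ (Nat.find (bal_exists g s) : ℤ) := Int.natCast_nonneg _
  simp only [mEnd]; omega

lemma bal_mEnd_neg (g : Finset ℤ) (s : ℤ) : bal g s (mEnd g s) < 0 :=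
  Nat.find_spec (bal_exists g s)

lemma bal_nonneg_of_lt_mEnd {g : Finset ℤ} {s c : ℤ} (h1 : s < c) (h2 : c < mEnd g s) :
    0 ≤ bal g s c := by
  have hc : c = s + 1 + ((c - s - 1).toNat : ℤ) := by omega
  have hlt : (c - s - 1).toNat < Nat.find (bal_exists g s) := by
    simp only [mEnd] at h2; omega
  have := Nat.find_min (bal_exists g s) hlt
  rw [hc]; omega

lemma mEnd_le_of_bal_neg {g : Finset ℤ} {s c : ℤ} (h1 : s < c) (h2 : bal g s c < 0) :
    mEnd g s ≤ c := by
  have hc : c = s + 1 + ((c - s - 1).toNat : ℤ) := by omega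
  have : Nat.find (bal_exists g s) ≤ (c - s - 1).toNat := by
    apply Nat.find_le; rw [← hc]; exact h2
  simp only [mEnd]; omega

lemma mEnd_eq_of {g : Finset ℤ} {s e : ℤ} (h1 : s < e) (h2 : bal g s e < 0)
    (h3 : ∀ c, s < c → c < e → 0 ≤ bal g s c) : mEnd g s = e := by
  have hle := mEnd_le_of_bal_neg h1 h2
  rcases lt_or_eq_of_le hle with h | h
  · exact absurd (h3 _ (lt_mEnd g s) h) (by have := bal_mEnd_neg g s; omega)
  · exact h

lemma bal_add {g : Finset ℤ} {s b c : ℤ} (h1 : s ≤ b) (h2 : b ≤ c) :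
    bal g s c = bal g s b + bal g b c := by
  have : g ∩ Finset.Ioc s c = (g ∩ Finset.Ioc s b) ∪ (g ∩ Finset.Ioc b c) := by
    rw [← Finset.inter_union_distrib_left, Finset.Ioc_union_Ioc_eq_Ioc h1 h2]
  have hd : Disjoint (g ∩ Finset.Ioc s b) (g ∩ Finset.Ioc b c) := by
    apply Finset.disjoint_left.2
    intro x hx hx'
    simp only [Finset.mem_inter, Finset.mem_Ioc] at hx hx'
    omega
  have hcard := Finset.card_union_of_disjoint hd
  simp only [bal, this, hcard]
  push_cast
  ring

lemma bal_step {g : Finset ℤ} {s c : ℤ} (h : s < c) :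
    bal g s c = bal g s (c - 1) + (if c ∈ g then 1 else -1) := by
  have h1 : bal g s c = bal g s (c-1) + bal g (c-1) c := bal_add (by omega) (by omega)
  have h2 : Finset.Ioc (c-1) c = {c} := by
    ext x; simp only [Finset.mem_Ioc, Finset.mem_singleton]; omega
  have h3 : bal g (c-1) c = if c ∈ g then 1 else -1 := by
    simp only [bal, h2]
    by_cases hc : c ∈ g
    · rw [Finset.inter_singleton_of_mem hc, if_pos hc]; simp
    · rw [Finset.inter_singleton_of_notMem hc, if_neg hc]; simp
  rw [h1, h3]

lemma bal_mEnd (g : Finset ℤ) (s : ℤ) : bal g s (mEnd g s) = -1 := by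
  have h0 := bal_mEnd_neg g s
  have hlt := lt_mEnd g s
  have hstep := bal_step (g := g) hlt
  by_cases h : s < mEnd g s - 1
  · have := bal_nonneg_of_lt_mEnd (g := g) h (by omega)
    split_ifs at hstep <;> omega
  · have : mEnd g s - 1 = s := by omega
    rw [this, bal_self] at hstep
    split_ifs at hstep <;> omega

lemma mEnd_not_mem (g : Finset ℤ) (s : ℤ) : mEnd g s ∉ g := by
  intro hmem
  have h0 := bal_mEnd g s
  have hlt := lt_mEnd g s
  have hstep := bal_step (g := g) hlt
  rw [if_pos hmem] at hstep
  by_cases h : s < mEnd g s - 1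
  · have := bal_nonneg_of_lt_mEnd (g := g) h (by omega); omega
  · have : mEnd g s - 1 = s := by omega
    rw [this, bal_self] at hstep; omega

/-- nesting -/
lemma mEnd_nest {g : Finset ℤ} {s s' : ℤ} (h1 : s < s') (h2 : s' < mEnd g s) :
    mEnd g s' ≤ mEnd g s := by
  have hb : bal g s (mEnd g s) = bal g s s' + bal g s' (mEnd g s) :=
    bal_add (le_of_lt h1) (le_of_lt h2)
  have h3 : 0 ≤ bal g s s' := bal_nonneg_of_lt_mEnd h1 h2
  have h4 := bal_mEnd g s
  exact mEnd_le_of_bal_neg h2 (by omega)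

/-- injectivity of `mEnd` for starts in `g` -/
lemma mEnd_inj {g : Finset ℤ} {s s' : ℤ} (h1 : s < s') (hs' : s' ∈ g)
    (h : mEnd g s = mEnd g s') : False := by
  have hlt' := lt_mEnd g s'
  have hlt : s' < mEnd g s := by omega
  have hb : bal g s (mEnd g s) = bal g s (s' - 1) + bal g (s'-1) s' + bal g s' (mEnd g s) := by
    rw [bal_add (c := mEnd g s) (b := s'-1) (by omega) (by omega),
        bal_add (s := s'-1) (b := s') (by omega) (by omega)]
    ring
  have h2 : bal g (s'-1) s' = 1 := by
    have := bal_step (g := g) (s := s'-1) (c := s') (by omega)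
    rw [if_pos hs'] at this
    simpa [bal_self] using this
  have h3 : bal g s' (mEnd g s) = -1 := by rw [h]; exact bal_mEnd g s'
  have h4 : bal g s (mEnd g s) = -1 := bal_mEnd g s
  have h5 : bal g s (s' - 1) = -1 := by omega
  by_cases h6 : s < s' - 1
  · have := bal_nonneg_of_lt_mEnd (g := g) h6 (by omega); omega
  · have : s' - 1 = s := by omega
    rw [this, bal_self] at h5; omega

/-- coverage: every non-`g` point strictly inside a cap is the end of a smaller cap. -/
lemma mEnd_cover {g : Finset ℤ} {s c : ℤ} (h1 : s < c) (h2 : c < mEnd g s) (h3 : c ∉ g) :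
    ∃ s', s' ∈ g ∧ s < s' ∧ s' < c ∧ mEnd g s' = c := by
  -- c ≥ s + 2
  have hc2 : s + 2 ≤ c := by
    by_contra h
    have hcs : c = s + 1 := by omega
    have : bal g s c = -1 := by
      have := bal_step (g := g) h1
      rw [if_neg h3] at this
      rw [hcs] at this ⊢
      simpa [bal_self] using this
    have := bal_nonneg_of_lt_mEnd h1 h2
    omega
  -- W = {w ∈ [s, c-2] : 0 ≤ bal g w c}
  set W := (Finset.Icc s (c-2)).filter (fun w => 0 ≤ bal g w c) with hW
  have hsW : s ∈ W := by
    simp only [hW, Finset.mem_filter, Finset.mem_Icc]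
    exact ⟨⟨le_refl s, by omega⟩, bal_nonneg_of_lt_mEnd h1 h2⟩
  have hWne : W.Nonempty := ⟨s, hsW⟩
  set w := W.max' hWne with hw
  have hwW : w ∈ W := W.max'_mem hWne
  have hwprop : s ≤ w ∧ w ≤ c - 2 ∧ 0 ≤ bal g w c := by
    have := hwW
    simp only [hW, Finset.mem_filter, Finset.mem_Icc] at this
    exact ⟨this.1.1, this.1.2, this.2⟩
  -- every b in (w, c-1] has bal g b c < 0  (for b ≤ c-2 by maximality; b = c-1 directly)
  have hneg : ∀ b, w < b → b ≤ c - 1 → bal g b c < 0 := by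
    intro b hb1 hb2
    by_cases hb3 : b ≤ c - 2
    · by_contra hcon
      push_neg at hcon
      have hbW : b ∈ W := by
        simp only [hW, Finset.mem_filter, Finset.mem_Icc]
        exact ⟨⟨by omega, hb3⟩, hcon⟩
      have := W.le_max' b hbW
      omega
    · have hb4 : b = c - 1 := by omega
      have := bal_step (g := g) (s := c-1) (c := c) (by omega)
      rw [if_neg h3] at this
      rw [hb4]
      simp only [bal_self] at this
      omega
  -- step at w+1
  have hstep : bal g w c = bal g w (w+1) + bal g (w+1) c := bal_add (by omega) (by omega)
  have hwc : bal g (w+1) c < 0 := hneg (w+1) (by omega) (by omega)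
  have hw1 : bal g w (w+1) = if (w+1) ∈ g then 1 else -1 := by
    have := bal_step (g := g) (s := w) (c := w+1) (by omega)
    simpa [bal_self] using this
  have hmem : (w+1) ∈ g := by
    by_contra hx
    rw [if_neg hx] at hw1
    omega
  rw [if_pos hmem] at hw1
  refine ⟨w+1, hmem, by omega, by omega, ?_⟩
  apply mEnd_eq_of (by omega)
  · omega
  · intro b hb1 hb2
    have hbal : bal g (w+1) c = bal g (w+1) b + bal g b c := bal_add (by omega) (by omega)
    have := hneg b (by omega) (by omega)
    have h1' : bal g (w+1) c = -1 := by omega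
    -- need bal g b c ≤ -1
    omega

-- capEnd helper
lemma capEnd_eq {T : Finset ℤ} {a e : ℤ} (h1 : a < e) (h2 : e ∉ T)
    (h3 : ∀ c, a < c → c < e → c ∈ T) : capEnd T a = e := by
  have hn : e = a + 1 + ((e - a - 1).toNat : ℤ) := by omega
  have : Nat.find (exists_free T a) = (e - a - 1).toNat := by
    rw [Nat.find_eq_iff]
    constructor
    · rw [← hn]; exact h2
    · intro m hm
      simp only [not_not]
      apply h3
      · omega
      · omega
  simp only [capEnd, this]; omega

lemma buildCaps_eq (g : Finset ℤ) : ∀ (l : List ℤ) (t : Finset ℤ),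
    l.toFinset = t → List.Pairwise (· > ·) l → t ⊆ g →
    (∀ x ∈ g, x ∉ t → ∀ y ∈ t, y < x) →
    buildCaps g l ((g \ t).image (mEnd g)) = t.image (fun s => (s, mEnd g s)) := by
  intro l
  induction l with
  | nil =>
    intro t ht _ _ _
    simp only [List.toFinset_nil] at ht
    subst ht
    simp [buildCaps]
  | cons a l' ih =>
    intro t ht hpw hsub habove
    have hal' : a ∉ l' := by
      intro hmem
      have := List.rel_of_pairwise_cons hpw hmem
      omega
    have ht' : l'.toFinset = t.erase a := by
      rw [← ht]
      simp only [List.toFinset_cons]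
      rw [Finset.erase_insert]
      simp [hal']
    have hat : a ∈ t := by rw [← ht]; simp
    have hag : a ∈ g := hsub hat
    have hamax : ∀ y ∈ t, y ≤ a := by
      intro y hy
      rw [← ht] at hy
      simp only [List.mem_toFinset, List.mem_cons] at hy
      rcases hy with h | h
      · omega
      · have := List.rel_of_pairwise_cons hpw h; omega
    -- capEnd computation
    have hce : capEnd (g ∪ (g \ t).image (mEnd g)) a = mEnd g a := by
      apply capEnd_eq (lt_mEnd g a)
      · intro hmem
        rcases Finset.mem_union.1 hmem with h | h
        · exact mEnd_not_mem g a h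
        · rcases Finset.mem_image.1 h with ⟨x, hx, hxe⟩
          rcases Finset.mem_sdiff.1 hx with ⟨hxg, hxt⟩
          have hxa : a < x := habove x hxg hxt a hat
          exact mEnd_inj hxa hxg hxe.symm
      · intro c hc1 hc2
        by_cases hcg : c ∈ g
        · exact Finset.mem_union_left _ hcg
        · obtain ⟨s', hs'g, hs'1, hs'2, hs'3⟩ := mEnd_cover hc1 hc2 hcg
          apply Finset.mem_union_right
          apply Finset.mem_image.2
          refine ⟨s', ?_, hs'3⟩
          apply Finset.mem_sdiff.2
          refine ⟨hs'g, fun hmem => ?_⟩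
          have := hamax s' hmem
          omega
    have hrec : (g \ t.erase a).image (mEnd g) =
        insert (mEnd g a) ((g \ t).image (mEnd g)) := by
      have : g \ t.erase a = insert a (g \ t) := by
        ext x
        simp only [Finset.mem_sdiff, Finset.mem_erase, Finset.mem_insert]
        constructor
        · rintro ⟨hxg, hx⟩
          by_cases hxa : x = a
          · left; exact hxa
          · right; exact ⟨hxg, fun hxt => hx ⟨hxa, hxt⟩⟩
        · rintro (rfl | ⟨hxg, hxt⟩)
          · exact ⟨hag, fun h => h.1 rfl⟩
          · exact ⟨hxg, fun h => hxt h.2⟩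
      rw [this, Finset.image_insert]
    have ihl' := ih (t.erase a) ht' (List.Pairwise.of_cons hpw)
      (fun x hx => hsub (Finset.erase_subset _ _ hx))
      (by
        intro x hxg hxt y hy
        have hyt : y ∈ t := Finset.erase_subset _ _ hy
        have hya : y ≠ a := (Finset.mem_erase.1 hy).1
        by_cases hxa : x = a
        · subst hxa
          have := hamax y hyt; omega
        · exact habove x hxg (fun h => hxt (Finset.mem_erase.2 ⟨hxa, h⟩)) y hyt)
    show buildCaps g (a :: l') _ = _
    rw [buildCaps, hce, ← hrec, ihl']
    -- insert (a, mEnd g a) ((t.erase a).image ...) = t.image ...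
    rw [← Finset.image_insert (fun s => (s, mEnd g s)) a (t.erase a),
      Finset.insert_erase hat]

lemma Dcap_eq (g : Finset ℤ) : Dcap g = g.image (fun s => (s, mEnd g s)) := by
  have h := buildCaps_eq g ((g.sort (· ≤ ·)).reverse) g ?_ ?_ (Finset.Subset.refl g) ?_
  · simpa [Dcap] using h
  · ext x; simp [Finset.mem_sort]
  · rw [List.pairwise_reverse]
    have hs := (Finset.sortedLT_sort g).pairwise
    exact hs
  · intro x hxg hxt
    exact (hxt hxg).elim

/-- membership criterion for `flat` -/
lemma mem_flat_iff {f g : Weight} :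
    g ∈ flat f ↔ g.card = f.card ∧
      ∀ s ∈ g, (s ∈ f ∧ mEnd g s ∉ f) ∨ (s ∉ f ∧ mEnd g s ∈ f) := by
  simp only [flat, Set.mem_setOf_eq, Matches, Dcap_eq]
  refine and_congr_right fun _ => ⟨fun h s hs => h _ (Finset.mem_image_of_mem _ hs), ?_⟩
  rintro h c hc
  obtain ⟨s, hs, rfl⟩ := Finset.mem_image.1 hc
  exact h s hs
lemma mEnd_le_card (g : Finset ℤ) (s : ℤ) : mEnd g s ≤ s + 2 * (g.card : ℤ) + 1 := by
  have h := bal_mEnd g s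
  have hcard : ((g ∩ Finset.Ioc s (mEnd g s)).card : ℤ) ≤ (g.card : ℤ) := by
    exact_mod_cast Finset.card_le_card (Finset.inter_subset_left)
  simp only [bal] at h
  omega

lemma mem_flat_bounds {f g : Weight} (hg : g ∈ flat f) (hf : f.Nonempty) :
    ∀ s ∈ g, s ≤ f.max' hf ∧ f.min' hf - 2 * (g.card : ℤ) - 1 ≤ s := by
  intro s hs
  rcases (mem_flat_iff.1 hg).2 s hs with ⟨h1, _⟩ | ⟨_, h2⟩
  · have h3 := f.le_max' s h1
    have h4 := f.min'_le s h1
    have := mEnd_le_card g s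
    omega
  · have h3 := f.le_max' _ h2
    have h4 := f.min'_le _ h2
    have h5 := lt_mEnd g s
    have := mEnd_le_card g s
    omega

lemma flat_finite {f : Weight} (hf : f.Nonempty) : (flat f).Finite := by
  apply Set.Finite.subset
    ((Finset.Icc (f.min' hf - 2 * (f.card : ℤ) - 1) (f.max' hf)).powerset.finite_toSet)
  intro g hg
  have hcard : g.card = f.card := (mem_flat_iff.1 hg).1
  simp only [Finset.coe_powerset, Set.mem_preimage, Set.mem_powerset_iff]
  intro s hs
  have := mem_flat_bounds hg hf s hs
  simp only [Finset.coe_Icc, Set.mem_Icc]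
  rw [← hcard]
  exact ⟨this.2, this.1⟩

lemma bal_insert {h : Finset ℤ} {a : ℤ} (ha : a ∉ h) (s c : ℤ) :
    bal (insert a h) s c = bal h s c + (if s < a ∧ a ≤ c then 2 else 0) := by
  by_cases hmem : s < a ∧ a ≤ c
  · have : (insert a h) ∩ Finset.Ioc s c = insert a (h ∩ Finset.Ioc s c) := by
      rw [Finset.insert_inter_of_mem]
      simp only [Finset.mem_Ioc]; omega
    rw [if_pos hmem]
    simp only [bal, this]
    rw [Finset.card_insert_of_notMem (fun hx => ha (Finset.mem_inter.1 hx).1)]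
    push_cast; ring
  · have : (insert a h) ∩ Finset.Ioc s c = h ∩ Finset.Ioc s c := by
      rw [Finset.insert_inter_of_notMem]
      simp only [Finset.mem_Ioc]; omega
    rw [if_neg hmem]
    simp [bal, this]

lemma mEnd_insert_self {h : Finset ℤ} {a : ℤ} (hha : ∀ x ∈ h, x < a) :
    mEnd (insert a h) a = a + 1 := by
  apply mEnd_eq_of (by omega)
  · have hnm : a + 1 ∉ insert a h := by
      simp only [Finset.mem_insert]
      push_neg
      exact ⟨by omega, fun hm => by have := hha _ hm; omega⟩
    have := bal_step (g := insert a h) (s := a) (c := a + 1) (by omega)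
    rw [if_neg hnm] at this
    simp only [show a + 1 - 1 = a by ring, bal_self] at this
    omega
  · intro c h1 h2; omega

lemma mEnd_insert_lt {h : Finset ℤ} {a s : ℤ} (hha : ∀ x ∈ h, x < a) (hs : s < a)
    (hlt : mEnd h s < a) : mEnd (insert a h) s = mEnd h s := by
  have ha : a ∉ h := fun hm => by have := hha _ hm; omega
  apply mEnd_eq_of (lt_mEnd h s)
  · rw [bal_insert ha, if_neg (by omega)]
    have := bal_mEnd_neg h s; omega
  · intro c h1 h2
    rw [bal_insert ha, if_neg (by omega)]
    have := bal_nonneg_of_lt_mEnd (g := h) h1 h2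
    omega

lemma mEnd_insert_ge {h : Finset ℤ} {a s : ℤ} (hha : ∀ x ∈ h, x < a) (hs : s < a)
    (hge : a ≤ mEnd h s) : mEnd (insert a h) s = mEnd h s + 2 := by
  have ha : a ∉ h := fun hm => by have := hha _ hm; omega
  have hms := lt_mEnd h s
  have hm1 : mEnd h s + 1 ∉ h := fun hm => by have := hha _ hm; omega
  have hm2 : mEnd h s + 2 ∉ h := fun hm => by have := hha _ hm; omega
  have hb1 : bal h s (mEnd h s + 1) = -2 := by
    have := bal_step (g := h) (s := s) (c := mEnd h s + 1) (by omega)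
    rw [if_neg (by simpa using hm1)] at this
    simp only [add_sub_cancel_right] at this
    have := bal_mEnd h s
    omega
  have hb2 : bal h s (mEnd h s + 2) = -3 := by
    have := bal_step (g := h) (s := s) (c := mEnd h s + 2) (by omega)
    rw [if_neg (by simpa using hm2)] at this
    simp only [show mEnd h s + 2 - 1 = mEnd h s + 1 by ring] at this
    omega
  apply mEnd_eq_of (by omega)
  · rw [bal_insert ha, if_pos ⟨hs, by omega⟩]
    omega
  · intro c h1 h2
    rw [bal_insert ha]
    by_cases hc : c < a
    · rw [if_neg (by omega)]
      have := bal_nonneg_of_lt_mEnd (g := h) h1 (by omega); omega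
    · rw [if_pos ⟨hs, by omega⟩]
      -- bal h s c ≥ -2 for c ≤ mEnd h s + 1
      by_cases hc2 : c < mEnd h s
      · have := bal_nonneg_of_lt_mEnd (g := h) h1 hc2; omega
      · have hc3 : c = mEnd h s ∨ c = mEnd h s + 1 := by omega
        rcases hc3 with rfl | rfl
        · have := bal_mEnd h s; omega
        · omega

/-- Transfer lemma: peeling the maximum. -/
lemma insert_mem_flat_iff {f : Weight} (hf : f.Nonempty) {h : Finset ℤ}
    (hha : ∀ x ∈ h, x < f.max' hf) :
    insert (f.max' hf) h ∈ flat f ↔ h ∈ flat (f.erase (f.max' hf)) := by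
  set a := f.max' hf with hadef
  have haf : a ∈ f := f.max'_mem hf
  have hfa : ∀ y ∈ f, y ≤ a := fun y hy => f.le_max' y hy
  have hins : insert a (f.erase a) = f := Finset.insert_erase haf
  have hanotin : a ∉ h := fun hm => by have := hha _ hm; omega
  have hcard : (insert a h).card = h.card + 1 := Finset.card_insert_of_notMem hanotin
  have hcard' : f.card = (f.erase a).card + 1 := by
    have h1 : (f.erase a).card = f.card - 1 := Finset.card_erase_of_mem haf
    have h2 : 0 < f.card := Finset.card_pos.2 hf
    omega
  rw [mem_flat_iff, mem_flat_iff]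
  constructor
  · rintro ⟨hc, hcond⟩
    refine ⟨by omega, ?_⟩
    intro s hs
    have hsa : s < a := hha s hs
    have hcs := hcond s (Finset.mem_insert_of_mem hs)
    by_cases hlt : mEnd h s < a
    · rw [mEnd_insert_lt hha hsa hlt] at hcs
      rcases hcs with ⟨h1, h2⟩ | ⟨h1, h2⟩
      · exact Or.inl ⟨Finset.mem_erase.2 ⟨by omega, h1⟩,
          fun hm => h2 (Finset.mem_of_mem_erase hm)⟩
      · exact Or.inr ⟨fun hm => h1 (Finset.mem_of_mem_erase hm),
          Finset.mem_erase.2 ⟨by omega, h2⟩⟩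
    · push_neg at hlt
      rw [mEnd_insert_ge hha hsa hlt] at hcs
      have hnf : mEnd h s + 2 ∉ f := fun hm => by have := hfa _ hm; omega
      have hnf' : mEnd h s ∉ f.erase a := fun hm => by
        have := hfa _ (Finset.mem_of_mem_erase hm); have h2 := Finset.mem_erase.1 hm; omega
      rcases hcs with ⟨h1, h2⟩ | ⟨h1, h2⟩
      · exact Or.inl ⟨Finset.mem_erase.2 ⟨by omega, h1⟩, hnf'⟩
      · exact absurd h2 hnf
  · rintro ⟨hc, hcond⟩
    refine ⟨by omega, ?_⟩
    intro s hs
    rcases Finset.mem_insert.1 hs with rfl | hsh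
    · rw [mEnd_insert_self hha]
      refine Or.inl ⟨haf, fun hm => ?_⟩
      have := hfa _ hm; omega
    · have hsa : s < a := hha s hsh
      have hcs := hcond s hsh
      by_cases hlt : mEnd h s < a
      · rw [mEnd_insert_lt hha hsa hlt]
        rcases hcs with ⟨h1, h2⟩ | ⟨h1, h2⟩
        · exact Or.inl ⟨Finset.mem_of_mem_erase h1,
            fun hm => h2 (Finset.mem_erase.2 ⟨by omega, hm⟩)⟩
        · exact Or.inr ⟨fun hm => h1 (Finset.mem_erase.2 ⟨by omega, hm⟩),
            Finset.mem_of_mem_erase h2⟩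
      · push_neg at hlt
        rw [mEnd_insert_ge hha hsa hlt]
        have hnf : mEnd h s + 2 ∉ f := fun hm => by have := hfa _ hm; omega
        rcases hcs with ⟨h1, h2⟩ | ⟨h1, h2⟩
        · exact Or.inl ⟨Finset.mem_of_mem_erase h1, hnf⟩
        · exfalso
          have hne := (Finset.mem_erase.1 h2).1
          have := hfa _ (Finset.mem_of_mem_erase h2)
          omega
lemma exists_free_lt (T : Finset ℤ) (a : ℤ) : ∃ n : ℕ, a - 1 - (n : ℤ) ∉ T := by
  by_contra h
  push_neg at h
  have hinj : Function.Injective (fun n : ℕ => a - 1 - (n : ℤ)) := by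
    intro m n hmn
    have : ((m : ℤ)) = (n : ℤ) := by simpa using hmn
    exact_mod_cast this
  exact (Set.infinite_of_injective_forall_mem hinj (fun n => h n)) T.finite_toSet

/-- the greatest integer `< a` avoiding `T` -/
noncomputable def cStart (T : Finset ℤ) (a : ℤ) : ℤ := a - 1 - (Nat.find (exists_free_lt T a) : ℤ)

lemma cStart_lt (T : Finset ℤ) (a : ℤ) : cStart T a < a := by
  have : (0:ℤ) ≤ (Nat.find (exists_free_lt T a) : ℤ) := Int.natCast_nonneg _
  simp only [cStart]; omega

lemma cStart_not_mem (T : Finset ℤ) (a : ℤ) : cStart T a ∉ T :=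
  Nat.find_spec (exists_free_lt T a)

lemma cStart_interior {T : Finset ℤ} {a : ℤ} : ∀ y, cStart T a < y → y < a → y ∈ T := by
  intro y h1 h2
  have hy : y = a - 1 - ((a - 1 - y).toNat : ℤ) := by omega
  have hlt : (a - 1 - y).toNat < Nat.find (exists_free_lt T a) := by
    simp only [cStart] at h1; omega
  have := Nat.find_min (exists_free_lt T a) hlt
  simp only [not_not] at this
  rwa [hy]

noncomputable def gStar (f : Finset ℤ) : Finset ℤ :=
  if hf : f.Nonempty then
    insert (cStart (f.erase (f.max' hf) ∪ gStar (f.erase (f.max' hf))) (f.max' hf))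
      (gStar (f.erase (f.max' hf)))
  else ∅
termination_by f.card
decreasing_by
  exact Finset.card_erase_lt_of_mem (f.max'_mem hf)

lemma gStar_empty : gStar ∅ = ∅ := by rw [gStar]; simp

lemma gStar_of_nonempty {f : Finset ℤ} (hf : f.Nonempty) :
    gStar f = insert (cStart (f.erase (f.max' hf) ∪ gStar (f.erase (f.max' hf))) (f.max' hf))
      (gStar (f.erase (f.max' hf))) := by
  rw [gStar]; simp [hf]

lemma mEnd_congr {g1 g2 : Finset ℤ} {s : ℤ}
    (h : ∀ c, s < c → bal g1 s c = bal g2 s c) : mEnd g1 s = mEnd g2 s := by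
  apply mEnd_eq_of (lt_mEnd g2 s)
  · rw [h _ (lt_mEnd g2 s)]; exact bal_mEnd_neg g2 s
  · intro c h1 h2
    rw [h _ h1]
    exact bal_nonneg_of_lt_mEnd h1 h2

lemma gStar_spec : ∀ (n : ℕ) (f : Finset ℤ), f.card = n →
    Disjoint (gStar f) f ∧ (gStar f).card = f.card ∧
      ∀ s ∈ gStar f, mEnd (gStar f) s ∈ f := by
  intro n
  induction n using Nat.strong_induction_on with
  | _ n ih =>
  intro f hfn
  rcases Finset.eq_empty_or_nonempty f with rfl | hf
  · simp [gStar_empty]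
  set a := f.max' hf with hadef
  set f' := f.erase a with hf'def
  set g' := gStar f' with hg'def
  set x := cStart (f' ∪ g') a with hxdef
  have hrw : gStar f = insert x g' := gStar_of_nonempty hf
  have haf : a ∈ f := f.max'_mem hf
  have hcard' : f'.card < n := by
    rw [← hfn]; exact Finset.card_erase_lt_of_mem haf
  obtain ⟨hd', hc', hm'⟩ := ih f'.card hcard' f' rfl
  rw [← hg'def] at hd' hc' hm'
  have hflt : ∀ y ∈ f', y < a := by
    intro y hy
    have h1 := (Finset.mem_erase.1 hy).1
    have h2 := f.le_max' y (Finset.mem_of_mem_erase hy)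
    omega
  have hglt : ∀ s ∈ g', s < a := by
    intro s hs
    have h1 := hm' s hs
    have h2 := hflt _ h1
    have h3 := lt_mEnd g' s
    omega
  have hx1 : x < a := cStart_lt _ _
  have hxnm : x ∉ f' ∪ g' := cStart_not_mem _ _
  have hxf' : x ∉ f' := fun h => hxnm (Finset.mem_union_left _ h)
  have hxg' : x ∉ g' := fun h => hxnm (Finset.mem_union_right _ h)
  have hx3 : ∀ y, x < y → y < a → y ∈ f' ∪ g' := fun y => cStart_interior y
  have hag' : a ∉ g' := fun h => by have := hglt _ h; omega
  -- injectivity of mEnd on g'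
  have hinj : Set.InjOn (mEnd g') ↑g' := by
    intro s hs t ht hst
    by_contra hne
    rcases lt_or_gt_of_ne hne with h | h
    · exact mEnd_inj h (by simpa using ht) hst
    · exact mEnd_inj h (by simpa using hs) hst.symm
  have himg : g'.image (mEnd g') = f' := by
    apply Finset.eq_of_subset_of_card_le
    · intro e he
      rcases Finset.mem_image.1 he with ⟨s, hs, rfl⟩
      exact hm' s hs
    · rw [Finset.card_image_of_injOn hinj, hc']
  -- key: caps of g' starting below x end below x
  have hkey : ∀ s ∈ g', s < x → mEnd g' s < x := by
    intro s hs hsx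
    have h1 : mEnd g' s ∈ f' := hm' s hs
    have h2 : mEnd g' s ≠ x := fun h => hxf' (h ▸ h1)
    by_contra h3
    push_neg at h3
    have h4 : x < mEnd g' s := by omega
    obtain ⟨s'', hs''g, _, _, hs''e⟩ := mEnd_cover hsx h4 hxg'
    exact hxf' (hs''e ▸ hm' s'' hs''g)
  -- mEnd (insert x g') s = mEnd g' s for s in g'
  have hpres : ∀ s ∈ g', mEnd (insert x g') s = mEnd g' s := by
    intro s hs
    rcases lt_trichotomy s x with h | h | h
    · have hme := hkey s hs h
      rw [show mEnd g' s = mEnd g' s from rfl]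
      apply mEnd_eq_of (lt_mEnd g' s)
      · rw [bal_insert hxg', if_neg (by omega)]
        have := bal_mEnd_neg g' s; omega
      · intro c h1 h2
        rw [bal_insert hxg', if_neg (by omega)]
        have := bal_nonneg_of_lt_mEnd (g := g') h1 h2
        omega
    · exact absurd (h ▸ hs) hxg'
    · apply mEnd_congr
      intro c hc
      rw [bal_insert hxg', if_neg (by omega)]
      omega
  -- counting facts
  have hdisj2 : ∀ c, Disjoint (f' ∩ Finset.Ioc x c) (g' ∩ Finset.Ioc x c) := by
    intro c
    apply Finset.disjoint_left.2
    intro y hy1 hy2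
    exact (Finset.disjoint_right.1 hd') (Finset.mem_inter.1 hy1).1 (Finset.mem_inter.1 hy2).1
  have hcover : ∀ c, x < c → c ≤ a - 1 →
      ((c - x) = ((f' ∩ Finset.Ioc x c).card : ℤ) + ((g' ∩ Finset.Ioc x c).card : ℤ)) := by
    intro c hc1 hc2
    have hsub : Finset.Ioc x c = (f' ∩ Finset.Ioc x c) ∪ (g' ∩ Finset.Ioc x c) := by
      ext y
      simp only [Finset.mem_union, Finset.mem_inter, Finset.mem_Ioc]
      constructor
      · intro hy
        have := hx3 y hy.1 (by omega)
        rcases Finset.mem_union.1 this with h | h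
        · exact Or.inl ⟨h, hy⟩
        · exact Or.inr ⟨h, hy⟩
      · rintro (⟨_, hy⟩ | ⟨_, hy⟩) <;> exact hy
    have hcard := Finset.card_union_of_disjoint (hdisj2 c)
    rw [← hsub] at hcard
    have hIoc : (Finset.Ioc x c).card = (c - x).toNat := Int.card_Ioc x c
    omega
  have hle : ∀ c, x < c → c ≤ a - 1 →
      ((f' ∩ Finset.Ioc x c).card : ℤ) ≤ ((g' ∩ Finset.Ioc x c).card : ℤ) := by
    intro c hc1 hc2
    have hsub : f' ∩ Finset.Ioc x c ⊆ (g' ∩ Finset.Ioc x c).image (mEnd g') := by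
      intro e he
      rcases Finset.mem_inter.1 he with ⟨hef, heI⟩
      have : e ∈ g'.image (mEnd g') := himg ▸ hef
      rcases Finset.mem_image.1 this with ⟨s, hs, rfl⟩
      apply Finset.mem_image.2
      refine ⟨s, Finset.mem_inter.2 ⟨hs, ?_⟩, rfl⟩
      simp only [Finset.mem_Ioc] at heI ⊢
      have hslt := lt_mEnd g' s
      constructor
      · -- x < s
        by_contra h
        push_neg at h
        have hsx : s < x := lt_of_le_of_ne h (fun hh => hxg' (hh ▸ hs))
        have := hkey s hs hsx
        omega
      · omega
    calc ((f' ∩ Finset.Ioc x c).card : ℤ) ≤ (((g' ∩ Finset.Ioc x c).image (mEnd g')).card : ℤ) := by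
          exact_mod_cast Finset.card_le_card hsub
      _ ≤ ((g' ∩ Finset.Ioc x c).card : ℤ) := by exact_mod_cast Finset.card_image_le
  have heq : x < a - 1 → ((f' ∩ Finset.Ioc x (a-1)).card : ℤ) = ((g' ∩ Finset.Ioc x (a-1)).card : ℤ) := by
    intro hxa
    have h1 := hle (a-1) hxa (le_refl _)
    have hsub2 : (g' ∩ Finset.Ioc x (a-1)).image (mEnd g') ⊆ f' ∩ Finset.Ioc x (a-1) := by
      intro e he
      rcases Finset.mem_image.1 he with ⟨s, hs, rfl⟩
      rcases Finset.mem_inter.1 hs with ⟨hsg, hsI⟩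
      apply Finset.mem_inter.2
      refine ⟨hm' s hsg, ?_⟩
      simp only [Finset.mem_Ioc] at hsI ⊢
      have h2 := lt_mEnd g' s
      have h3 := hflt _ (hm' s hsg)
      omega
    have hinj2 : Set.InjOn (mEnd g') ↑(g' ∩ Finset.Ioc x (a-1)) := by
      intro s hs t ht hst
      apply hinj _ _ hst
      · simp only [Finset.coe_inter, Set.mem_inter_iff] at hs; exact hs.1
      · simp only [Finset.coe_inter, Set.mem_inter_iff] at ht; exact ht.1
    have h2 : ((g' ∩ Finset.Ioc x (a-1)).card : ℤ) ≤ ((f' ∩ Finset.Ioc x (a-1)).card : ℤ) := by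
      have := Finset.card_le_card hsub2
      rw [Finset.card_image_of_injOn hinj2] at this
      exact_mod_cast this
    omega
  -- mEnd (insert x g') x = a
  have hmx : mEnd (insert x g') x = a := by
    have hbal : ∀ c, x < c → bal (insert x g') x c = 2 * ((g' ∩ Finset.Ioc x c).card : ℤ) - (c - x) := by
      intro c hc
      have : (insert x g') ∩ Finset.Ioc x c = g' ∩ Finset.Ioc x c := by
        rw [Finset.insert_inter_of_notMem]
        simp only [Finset.mem_Ioc]; omega
      simp [bal, this]
    apply mEnd_eq_of hx1
    · rw [hbal a hx1]
      have hga : g' ∩ Finset.Ioc x a = g' ∩ Finset.Ioc x (a-1) := by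
        ext y
        simp only [Finset.mem_inter, Finset.mem_Ioc]
        constructor
        · rintro ⟨hy1, hy2, hy3⟩
          have := hglt _ hy1
          exact ⟨hy1, hy2, by omega⟩
        · rintro ⟨hy1, hy2, hy3⟩
          exact ⟨hy1, hy2, by omega⟩
      rcases eq_or_lt_of_le (by omega : x + 1 ≤ a) with h | h
      · -- a = x + 1 : Ioc x (a-1) empty
        rw [hga]
        have : Finset.Ioc x (a-1) = ∅ := by
          apply Finset.Ioc_eq_empty; omega
        rw [this, Finset.inter_empty]
        simp only [Finset.card_empty, Nat.cast_zero]
        omega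
      · have hc0 := hcover (a-1) (by omega) (le_refl _)
        have he0 := heq (by omega)
        rw [hga]
        omega
    · intro c h1 h2
      rw [hbal c h1]
      have := hle c h1 (by omega)
      have := hcover c h1 (by omega)
      omega
  -- assemble
  have hxg'card : (insert x g').card = g'.card + 1 := Finset.card_insert_of_notMem hxg'
  have hfcard : f.card = f'.card + 1 := by
    have h1 : f'.card = f.card - 1 := Finset.card_erase_of_mem haf
    have h2 : 0 < f.card := Finset.card_pos.2 hf
    omega
  refine ⟨?_, ?_, ?_⟩
  · rw [hrw]
    apply Finset.disjoint_left.2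
    intro y hy hyf
    rcases Finset.mem_insert.1 hy with rfl | hyg
    · exact hxf' (Finset.mem_erase.2 ⟨by omega, hyf⟩)
    · have h1 := hglt _ hyg
      have h2 : y ∈ f' := Finset.mem_erase.2 ⟨by omega, hyf⟩
      exact (Finset.disjoint_left.1 hd') hyg h2
  · rw [hrw, hxg'card, hc', hfcard]
  · rw [hrw]
    intro s hs
    rcases Finset.mem_insert.1 hs with rfl | hsg
    · rw [hmx]; exact haf
    · rw [hpres s hsg]
      exact Finset.mem_of_mem_erase (hm' s hsg)

lemma gStar_mem_flat {f : Weight} : gStar f ∈ flat f := by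
  obtain ⟨hd, hc, hm⟩ := gStar_spec f.card f rfl
  rw [mem_flat_iff]
  refine ⟨hc, fun s hs => Or.inr ⟨fun hsf => (Finset.disjoint_left.1 hd) hs hsf, hm s hs⟩⟩

lemma gStar_disjoint (f : Weight) : Disjoint (gStar f) f := (gStar_spec f.card f rfl).1
/-- the second element of the rest-part when `f` has a gap below its maximum -/
lemma gstst_mem_flat {f : Weight} (hf : f.Nonempty) (ha1 : f.max' hf - 1 ∉ f) :
    insert (f.max' hf - 1) (f.erase (f.max' hf)) ∈ flat f := by
  set a := f.max' hf with hadef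
  set f' := f.erase a with hf'def
  set g := insert (a-1) f' with hgdef
  have haf : a ∈ f := f.max'_mem hf
  have hfa : ∀ y ∈ f, y ≤ a := fun y hy => f.le_max' y hy
  have hflt : ∀ y ∈ f', y < a := by
    intro y hy
    have h1 := (Finset.mem_erase.1 hy).1
    have h2 := hfa y (Finset.mem_of_mem_erase hy)
    omega
  have ha1f' : a - 1 ∉ f' := fun h => ha1 (Finset.mem_of_mem_erase h)
  have hag : a ∉ g := by
    simp only [hgdef, Finset.mem_insert]
    push_neg
    exact ⟨by omega, fun h => by have := hflt _ h; omega⟩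
  have hglt : ∀ y ∈ g, y < a := by
    intro y hy
    rcases Finset.mem_insert.1 hy with rfl | hy'
    · omega
    · exact hflt _ hy'
  rw [mem_flat_iff]
  constructor
  · rw [Finset.card_insert_of_notMem ha1f']
    have h1 : f'.card = f.card - 1 := Finset.card_erase_of_mem haf
    have h2 : 0 < f.card := Finset.card_pos.2 hf
    omega
  · intro s hs
    rcases Finset.mem_insert.1 hs with rfl | hsf'
    · -- s = a - 1, cap (a-1, a)
      have hm : mEnd g (a-1) = a := by
        apply mEnd_eq_of (by omega)
        · have hstep := bal_step (g := g) (s := a-1) (c := a) (by omega)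
          rw [if_neg hag] at hstep
          have hb : bal g (a-1) (a - 1) = 0 := bal_self g (a-1)
          omega
        · intro c h1 h2; omega
      rw [hm]
      exact Or.inr ⟨ha1, haf⟩
    · -- s ∈ f'
      have hsa : s ≤ a - 2 := by
        have h1 := hflt _ hsf'
        have h2 : s ≠ a - 1 := fun h => ha1f' (h ▸ hsf')
        omega
      refine Or.inl ⟨Finset.mem_of_mem_erase hsf', fun hmf => ?_⟩
      -- mEnd g s ∈ f: impossible
      have hmg : mEnd g s ∉ g := mEnd_not_mem g s
      have hmne : mEnd g s ≠ a := by
        intro hma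
        have hx1 : a - 1 ∈ g := Finset.mem_insert_self _ _
        have hb1 := bal_step (g := g) (s := s) (c := a) (by omega)
        rw [if_neg hag] at hb1
        have hb2 := bal_step (g := g) (s := s) (c := a-1) (by omega)
        rw [if_pos hx1] at hb2
        have hb3 : bal g s (mEnd g s) = -1 := bal_mEnd g s
        rw [hma] at hb3
        rcases eq_or_lt_of_le hsa with h | h
        · have h0 : bal g s (a - 1 - 1) = 0 := by
            rw [show a - 1 - 1 = s by omega]
            exact bal_self g s
          omega
        · have h0 : 0 ≤ bal g s (a - 1 - 1) :=
            bal_nonneg_of_lt_mEnd (g := g) (by omega) (by rw [hma]; omega)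
          omega
      have hmf' : mEnd g s ∈ f' := Finset.mem_erase.2 ⟨hmne, hmf⟩
      exact hmg (Finset.mem_insert_of_mem hmf')

/-- classification of the `max ∉ g` part of `♭f` for an interval `f` -/
lemma flat_rest_interval {u v : ℤ} {r : ℕ} (hr : 1 ≤ r) (hv : v = u + (r : ℤ) - 1)
    {g : Weight} (hg : g ∈ flat (Finset.Icc u v)) (hvg : v ∉ g) :
    g = Finset.Icc (u - (r : ℤ)) (u - 1) := by
  set f := Finset.Icc u v with hfdef
  have hfcard : f.card = r := by
    rw [hfdef, Int.card_Icc]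
    omega
  obtain ⟨hcard, hcond⟩ := mem_flat_iff.1 hg
  rw [hfcard] at hcard
  have huv : u ≤ v := by omega
  -- φ image
  set φ : ℤ → ℤ := fun s => if s ∈ f then s else mEnd g s with hφdef
  have hφinj : Set.InjOn φ ↑g := by
    intro s hs t ht hst
    simp only [Finset.mem_coe] at hs ht
    simp only [hφdef] at hst
    by_cases h1 : s ∈ f <;> by_cases h2 : t ∈ f
    · simpa [h1, h2] using hst
    · rw [if_pos h1, if_neg h2] at hst
      exact absurd (hst ▸ hs : mEnd g t ∈ g) (mEnd_not_mem g t)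
    · rw [if_neg h1, if_pos h2] at hst
      exact absurd (hst ▸ ht : mEnd g s ∈ g) (mEnd_not_mem g s)
    · rw [if_neg h1, if_neg h2] at hst
      by_contra hne
      rcases lt_or_gt_of_ne hne with h | h
      · exact mEnd_inj h ht hst
      · exact mEnd_inj h hs hst.symm
  have himg : g.image φ = f := by
    apply Finset.eq_of_subset_of_card_le
    · intro e he
      rcases Finset.mem_image.1 he with ⟨s, hs, rfl⟩
      rcases hcond s hs with ⟨h1, _⟩ | ⟨h1, h2⟩
      · simp [hφdef, h1]
      · simp [hφdef, h1, h2]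
    · rw [Finset.card_image_of_injOn hφinj, hcard, hfcard]
  -- the cap ending at v
  have hvf : v ∈ f := by simp [hfdef]; omega
  obtain ⟨s₀, hs₀g, hs₀⟩ := Finset.mem_image.1 (himg ▸ hvf)
  have hs₀f : s₀ ∉ f := by
    intro h
    simp only [hφdef, if_pos h] at hs₀
    exact hvg (hs₀ ▸ hs₀g)
  have hs₀m : mEnd g s₀ = v := by simpa [hφdef, hs₀f] using hs₀
  have hs₀u : s₀ < u := by
    have h1 := lt_mEnd g s₀
    rw [hs₀m] at h1
    simp only [hfdef, Finset.mem_Icc, not_and, not_le] at hs₀f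
    by_contra h
    push_neg at h
    have := hs₀f h
    omega
  -- g ∩ f = ∅
  have hgf : ∀ s ∈ g, s ∉ f := by
    intro s hsg hsf
    have hsv : s ≠ v := fun h => hvg (h ▸ hsg)
    have hsuv : u ≤ s ∧ s ≤ v := by simpa [hfdef] using hsf
    have hsmf : mEnd g s ∉ f := by
      rcases hcond s hsg with ⟨_, h2⟩ | ⟨h1, _⟩
      · exact h2
      · exact absurd hsf h1
    have hsm : v < mEnd g s := by
      have h1 := lt_mEnd g s
      simp only [hfdef, Finset.mem_Icc, not_and, not_le] at hsmf
      by_contra h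
      push_neg at h
      have := hsmf (by omega)
      omega
    have hb1 : bal g s₀ v = -1 := hs₀m ▸ bal_mEnd g s₀
    have hb2 : bal g s₀ v = bal g s₀ s + bal g s v := bal_add (by omega) (by omega)
    have hb3 : 0 ≤ bal g s₀ s := by
      apply bal_nonneg_of_lt_mEnd (g := g) (by omega)
      rw [hs₀m]; omega
    have hb4 : 0 ≤ bal g s v := bal_nonneg_of_lt_mEnd (g := g) (by omega) (by omega)
    omega
  have hcond' : ∀ s ∈ g, mEnd g s ∈ f := by
    intro s hs
    rcases hcond s hs with ⟨h1, _⟩ | ⟨_, h2⟩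
    · exact absurd h1 (hgf s hs)
    · exact h2
  have hglt : ∀ s ∈ g, s < u := by
    intro s hs
    have h1 := hcond' s hs
    have h2 := lt_mEnd g s
    simp only [hfdef, Finset.mem_Icc] at h1
    have h3 := hgf s hs
    simp only [hfdef, Finset.mem_Icc, not_and, not_le] at h3
    by_contra h
    push_neg at h
    have := h3 h
    omega
  have hgge : ∀ s ∈ g, s₀ ≤ s := by
    intro s hs
    by_contra h
    push_neg at h
    have h1 : mEnd g s ∈ f := hcond' s hs
    simp only [hfdef, Finset.mem_Icc] at h1
    have h2 : s₀ < mEnd g s := by omega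
    have h3 : mEnd g s₀ ≤ mEnd g s := mEnd_nest h h2
    have h4 : mEnd g s ≤ v := h1.2
    rw [hs₀m] at h3
    have h5 : mEnd g s = mEnd g s₀ := by omega
    exact mEnd_inj h hs₀g h5
  -- count
  have herase : g ∩ Finset.Ioc s₀ v = g.erase s₀ := by
    ext y
    simp only [Finset.mem_inter, Finset.mem_Ioc, Finset.mem_erase]
    constructor
    · rintro ⟨h1, h2, _⟩
      exact ⟨by omega, h1⟩
    · rintro ⟨h1, h2⟩
      have h3 := hgge y h2
      have h4 := hglt y h2
      exact ⟨h2, by omega, by omega⟩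
  have hb : bal g s₀ v = -1 := hs₀m ▸ bal_mEnd g s₀
  have hbc : ((g ∩ Finset.Ioc s₀ v).card : ℤ) = (r : ℤ) - 1 := by
    rw [herase, Finset.card_erase_of_mem hs₀g, hcard]
    have : 0 < r := hr
    push_cast
    omega
  have hs₀val : s₀ = u - (r : ℤ) := by
    simp only [bal] at hb
    rw [hbc] at hb
    omega
  -- conclude
  apply Finset.eq_of_subset_of_card_le
  · intro s hs
    simp only [Finset.mem_Icc]
    have h1 := hgge s hs
    have h2 := hglt s hs
    omega
  · rw [hcard, Int.card_Icc]
    omega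
lemma upToShift_iff {f : Weight} {r : ℕ} (hr : 1 ≤ r) :
    UpToShift f (qSet r) ↔ ∃ u : ℤ, f = Finset.Icc u (u + (r : ℤ) - 1) := by
  constructor
  · rintro ⟨k, hk⟩
    refine ⟨1 + k, ?_⟩
    rw [hk]
    ext x
    simp only [qSet, Finset.mem_image, Finset.mem_Icc]
    constructor
    · rintro ⟨y, hy, rfl⟩; omega
    · intro hx
      exact ⟨x - k, by omega, by omega⟩
  · rintro ⟨u, rfl⟩
    refine ⟨u - 1, ?_⟩
    ext x
    simp only [qSet, Finset.mem_image, Finset.mem_Icc]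
    constructor
    · intro hx
      exact ⟨x - (u-1), by omega, by omega⟩
    · rintro ⟨y, hy, rfl⟩; omega

lemma singleton_flat {w : ℤ} : flat ({w} : Finset ℤ) = {({w} : Finset ℤ), ({w-1} : Finset ℤ)} := by
  have hm : ∀ s : ℤ, mEnd ({s} : Finset ℤ) s = s + 1 := by
    intro s
    apply mEnd_eq_of (by omega)
    · have : ({s} : Finset ℤ) ∩ Finset.Ioc s (s+1) = ∅ := by
        ext y
        simp only [Finset.mem_inter, Finset.mem_singleton, Finset.mem_Ioc, Finset.notMem_empty,
          iff_false, not_and]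
        intro h; omega
      simp [bal, this]
    · intro c h1 h2; omega
  ext g
  simp only [Set.mem_insert_iff, Set.mem_singleton_iff]
  constructor
  · intro hg
    obtain ⟨hcard, hcond⟩ := mem_flat_iff.1 hg
    rw [Finset.card_singleton] at hcard
    obtain ⟨s, rfl⟩ := Finset.card_eq_one.1 hcard
    rcases hcond s (Finset.mem_singleton_self s) with ⟨h1, _⟩ | ⟨_, h2⟩
    · left
      rw [Finset.mem_singleton.1 h1]
    · right
      rw [hm s] at h2
      have : s + 1 = w := Finset.mem_singleton.1 h2
      congr 1
      omega
  · rintro (rfl | rfl)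
    · rw [mem_flat_iff]
      refine ⟨rfl, fun s hs => ?_⟩
      rw [Finset.mem_singleton.1 hs, hm]
      exact Or.inl ⟨Finset.mem_singleton_self w,
        by simp only [Finset.mem_singleton]; omega⟩
    · rw [mem_flat_iff]
      refine ⟨rfl, fun s hs => ?_⟩
      rw [Finset.mem_singleton.1 hs, hm]
      exact Or.inr ⟨by simp only [Finset.mem_singleton]; omega,
        by simp only [Finset.mem_singleton]; omega⟩

lemma main_aux : ∀ (r : ℕ), 1 ≤ r → ∀ f : Weight, f.card = r →
    ((r : ℕ) + 1 ≤ (flat f).ncard ∧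
      ((flat f).ncard = r + 1 ↔ ∃ u : ℤ, f = Finset.Icc u (u + (r : ℤ) - 1))) := by
  intro r
  induction r using Nat.strong_induction_on with
  | _ r ih =>
  intro hr f hf
  have hfne : f.Nonempty := Finset.card_pos.1 (by omega)
  -- case r = 1
  rcases eq_or_lt_of_le hr with h1 | h2
  · obtain ⟨w, rfl⟩ := Finset.card_eq_one.1 (by omega : f.card = 1)
    rw [singleton_flat]
    have hne : ({w} : Finset ℤ) ≠ ({w-1} : Finset ℤ) := by
      intro h
      have : w ∈ ({w-1} : Finset ℤ) := h ▸ Finset.mem_singleton_self w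
      simp only [Finset.mem_singleton] at this
      omega
    have h2 : ({({w} : Finset ℤ), ({w-1} : Finset ℤ)} : Set Weight).ncard = 2 :=
      Set.ncard_pair hne
    rw [h2, ← h1]
    refine ⟨by norm_num, ?_⟩
    constructor
    · intro _
      refine ⟨w, ?_⟩
      ext x; simp only [Finset.mem_singleton, Finset.mem_Icc]; push_cast; omega
    · intro _; norm_num
  -- case r ≥ 2
  have hr2 : 2 ≤ r := h2
  set a := f.max' hfne with hadef
  set f' := f.erase a with hf'def
  have haf : a ∈ f := f.max'_mem hfne
  have hfa : ∀ y ∈ f, y ≤ a := fun y hy => f.le_max' y hy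
  have hf'card : f'.card = r - 1 := by
    rw [hf'def, Finset.card_erase_of_mem haf, hf]
  have hf'ne : f'.Nonempty := Finset.card_pos.1 (by omega)
  have hflt : ∀ y ∈ f', y < a := by
    intro y hy
    have h1 := (Finset.mem_erase.1 hy).1
    have h2 := hfa y (Finset.mem_of_mem_erase hy)
    omega
  have IH := ih (r-1) (by omega) (by omega) f' hf'card
  -- flat f' elements are < a
  have hfelts : ∀ h ∈ flat f', ∀ x ∈ h, x < a := by
    intro h hh x hx
    have h1 := (mem_flat_bounds hh hf'ne x hx).1
    have h2 := hflt _ (f'.max'_mem hf'ne)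
    omega
  set A : Set Weight := {g | g ∈ flat f ∧ a ∈ g} with hAdef
  set B : Set Weight := {g | g ∈ flat f ∧ a ∉ g} with hBdef
  have hunion : flat f = A ∪ B := by
    ext g
    simp only [hAdef, hBdef, Set.mem_union, Set.mem_setOf_eq]
    tauto
  have hdisj : Disjoint A B := by
    rw [Set.disjoint_left]
    rintro g ⟨_, hg1⟩ ⟨_, hg2⟩
    exact hg2 hg1
  have hfin : (flat f).Finite := flat_finite hfne
  have hAfin : A.Finite := hfin.subset (by rw [hunion]; exact Set.subset_union_left)
  have hBfin : B.Finite := hfin.subset (by rw [hunion]; exact Set.subset_union_right)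
  have hncard : (flat f).ncard = A.ncard + B.ncard := by
    rw [hunion]
    exact Set.ncard_union_eq hdisj hAfin hBfin
  -- A = insert a '' flat f'
  have hA : A = (fun h => insert a h) '' (flat f') := by
    ext g
    simp only [hAdef, Set.mem_setOf_eq, Set.mem_image]
    constructor
    · rintro ⟨hg, hag⟩
      refine ⟨g.erase a, ?_, Finset.insert_erase hag⟩
      have helts : ∀ x ∈ g.erase a, x < a := by
        intro x hx
        have h1 := (mem_flat_bounds hg hfne x (Finset.mem_of_mem_erase hx)).1
        have h2 := (Finset.mem_erase.1 hx).1
        omega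
      have := (insert_mem_flat_iff hfne helts).1 (by rwa [Finset.insert_erase hag])
      exact this
    · rintro ⟨h, hh, rfl⟩
      refine ⟨(insert_mem_flat_iff hfne (hfelts h hh)).2 hh, Finset.mem_insert_self a h⟩
  have hAcard : A.ncard = (flat f').ncard := by
    rw [hA]
    apply Set.ncard_image_of_injOn
    intro h1 hh1 h2 hh2 heq
    have ha1 : a ∉ h1 := fun hm => by have := hfelts h1 hh1 a hm; omega
    have ha2 : a ∉ h2 := fun hm => by have := hfelts h2 hh2 a hm; omega
    have := congrArg (fun s => Finset.erase s a) heq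
    simpa [Finset.erase_insert ha1, Finset.erase_insert ha2] using this
  -- gStar in B
  have hgstarB : gStar f ∈ B := by
    refine ⟨gStar_mem_flat, fun hmem => ?_⟩
    exact (Finset.disjoint_left.1 (gStar_disjoint f)) hmem haf
  have hB1 : 1 ≤ B.ncard := by
    have : 0 < B.ncard := (Set.ncard_pos hBfin).2 ⟨_, hgstarB⟩
    omega
  have hIH1 : (r : ℕ) ≤ (flat f').ncard := by
    have := IH.1
    omega
  constructor
  · omega
  constructor
  · -- ncard = r + 1 → interval
    intro heq
    have hAr : A.ncard = r ∧ B.ncard = 1 := by omega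
    have hIH2 : ∃ u : ℤ, f' = Finset.Icc u (u + ((r : ℤ) - 1) - 1) := by
      have h3 := IH.2.1 (by omega)
      obtain ⟨u, hu⟩ := h3
      exact ⟨u, by rw [hu]; congr 1; push_cast; omega⟩
    obtain ⟨u, hu⟩ := hIH2
    have humem : u ∈ f' := by
      rw [hu]; simp only [Finset.mem_Icc]
      constructor
      · omega
      · push_cast; omega
    have haub : u + (r : ℤ) - 2 < a := by
      have : u + (r:ℤ) - 2 ∈ f' := by
        rw [hu]; simp only [Finset.mem_Icc]; constructor <;> push_cast <;> omega
      exact hflt _ this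
    by_cases hceq : a = u + (r : ℤ) - 1
    · refine ⟨u, ?_⟩
      have : f = insert a f' := (Finset.insert_erase haf).symm
      rw [this, hu, hceq]
      ext x
      simp only [Finset.mem_insert, Finset.mem_Icc]
      constructor
      · rintro (rfl | ⟨hx1, hx2⟩)
        · constructor <;> push_cast <;> omega
        · constructor
          · omega
          · push_cast at hx2 ⊢; omega
      · rintro ⟨hx1, hx2⟩
        push_cast at hx2
        by_cases hxx : x = u + (r:ℤ) - 1
        · left; omega
        · right
          constructor
          · omega
          · push_cast; omega
    · -- a > u + r - 1 : contradiction with B.ncard = 1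
      exfalso
      have hagt : u + (r:ℤ) - 1 < a := by omega
      have ha1f : a - 1 ∉ f := by
        intro hmem
        have h1 : a - 1 ∈ f' := Finset.mem_erase.2 ⟨by omega, hmem⟩
        rw [hu] at h1
        simp only [Finset.mem_Icc] at h1
        push_cast at h1
        omega
      have hg2 : insert (a - 1) f' ∈ B := by
        constructor
        · exact gstst_mem_flat hfne ha1f
        · simp only [Finset.mem_insert]
          push_neg
          exact ⟨by omega, fun hmem => by have := hflt _ hmem; omega⟩
      have hne : gStar f ≠ insert (a-1) f' := by
        intro hmem
        have h1 : u ∈ insert (a-1) f' := Finset.mem_insert_of_mem humem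
        rw [← hmem] at h1
        exact (Finset.disjoint_left.1 (gStar_disjoint f)) h1 (Finset.mem_of_mem_erase humem)
      have : 1 < B.ncard := by
        rw [Set.one_lt_ncard_iff hBfin]
        exact ⟨_, _, hgstarB, hg2, hne⟩
      omega
  · -- interval → ncard = r + 1
    rintro ⟨u, rfl⟩
    have hicc : ∀ x, x ∈ Finset.Icc u (u + (r:ℤ) - 1) ↔ u ≤ x ∧ x ≤ u + (r:ℤ) - 1 := by
      intro x; exact Finset.mem_Icc
    have hav : a = u + (r : ℤ) - 1 := by
      have h1 := hfa (u + (r:ℤ) - 1) (by rw [hicc]; omega)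
      have h2 : a ≤ u + (r:ℤ) - 1 := ((hicc a).1 haf).2
      omega
    have hf'I : f' = Finset.Icc u (u + ((r:ℤ) - 1) - 1) := by
      rw [hf'def]
      ext x
      simp only [Finset.mem_erase, hicc, Finset.mem_Icc]
      rw [hav]
      constructor
      · rintro ⟨h1, h2, h3⟩; omega
      · rintro ⟨h1, h2⟩
        refine ⟨by omega, by omega, by omega⟩
    have hAr : A.ncard = r := by
      rw [hAcard]
      have := IH.2.2 ⟨u, by rw [hf'I]; congr 1; push_cast; omega⟩
      omega
    have hBr : B.ncard = 1 := by
      have hsub : B ⊆ {Finset.Icc (u - (r:ℤ)) (u - 1)} := by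
        rintro g ⟨hg1, hg2⟩
        have := flat_rest_interval hr (show u + (r:ℤ) - 1 = u + (r:ℤ) - 1 from rfl)
          (v := u + (r:ℤ) - 1) hg1 (hav ▸ hg2)
        simp only [Set.mem_singleton_iff]
        exact this
      rcases Set.subset_singleton_iff_eq.1 hsub with h | h
      · exfalso
        rw [h] at hgstarB
        exact hgstarB
      · rw [h, Set.ncard_singleton]
    omega

theorem flat_card_ge' (r : ℕ) (hr : 1 ≤ r) (f : Weight) (hf : f.card = r) :
    r + 1 ≤ (flat f).ncard ∧ ((flat f).ncard = r + 1 ↔ UpToShift f (qSet r)) := by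
  have h := main_aux r hr f hf
  refine ⟨h.1, ?_⟩
  rw [h.2, upToShift_iff hr]

/-- If `#f = r ≥ 1`, then `|♭f| ≥ r + 1`, with equality iff
`f = q = (1, 2, …, r)` up to shift. -/
theorem flat_card_ge (r : ℕ) (hr : 1 ≤ r) (f : Weight) (hf : f.card = r) :
    r + 1 ≤ (flat f).ncard ∧ ((flat f).ncard = r + 1 ↔ UpToShift f (qSet r)) := by
  exact flat_card_ge' r hr f hf

end KacCatalan
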